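/- Let 𝒜 be an irreducible finite family of d×d real matrices possessing an invariant cone. Then the maximal invariant cone of 𝒜 equals the dual cone of the minimal invariant cone of the transposed family 𝒜^T: K_max(𝒜) = [K_min(𝒜^T)]^*. -/

import Mathlib

open Matrix Set

def IsProperCone {d : ℕ} (K : Set (Fin d → ℝ)) : Prop :=
  IsClosed K ∧ Convex ℝ K ∧ (∀ x ∈ K, ∀ t : ℝ, 0 ≤ t → t • x ∈ K) ∧
    K ∩ (-K) = {0} ∧ (interior K).Nonempty

def IsInvariantCone {d m : ℕ} (𝒜 : Fin m → Matrix (Fin d) (Fin d) ℝ)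
    (K : Set (Fin d → ℝ)) : Prop :=
  IsProperCone K ∧ ∀ i, ∀ x ∈ K, (𝒜 i).mulVec x ∈ K

def IsIrreducibleFamily {d m : ℕ} (𝒜 : Fin m → Matrix (Fin d) (Fin d) ℝ) : Prop :=
  ∀ V : Submodule ℝ (Fin d → ℝ), (∀ i, ∀ x ∈ V, (𝒜 i).mulVec x ∈ V) → V = ⊥ ∨ V = ⊤

/-- The dual cone `K^* = {x : (x,y) ≥ 0 for all y ∈ K}`. -/
def dualConeSet {d : ℕ} (K : Set (Fin d → ℝ)) : Set (Fin d → ℝ) :=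
  {x | ∀ y ∈ K, 0 ≤ x ⬝ᵥ y}

def IsMinimalInvariantCone {d m : ℕ} (𝒜 : Fin m → Matrix (Fin d) (Fin d) ℝ)
    (K : Set (Fin d → ℝ)) : Prop :=
  IsInvariantCone 𝒜 K ∧ ∀ K' : Set (Fin d → ℝ), IsInvariantCone 𝒜 K' → K ⊆ K' ∨ K ⊆ -K'

def IsMaximalInvariantCone {d m : ℕ} (𝒜 : Fin m → Matrix (Fin d) (Fin d) ℝ)
    (K : Set (Fin d → ℝ)) : Prop :=
  IsInvariantCone 𝒜 K ∧ ∀ K' : Set (Fin d → ℝ), IsInvariantCone 𝒜 K' → K' ⊆ K ∨ -K' ⊆ K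

/- ======================= auxiliary material ======================= -/

namespace AuxInvCone
open NNReal
variable {d m : ℕ}

theorem pc_zero {K : Set (Fin d → ℝ)} (h : IsProperCone K) : 0 ∈ K := by
  have := h.2.2.2.1
  have h0 : (0 : Fin d → ℝ) ∈ K ∩ (-K) := by rw [this]; rfl
  exact h0.1

theorem pc_add {K : Set (Fin d → ℝ)} (h : IsProperCone K) {x y : Fin d → ℝ}
    (hx : x ∈ K) (hy : y ∈ K) : x + y ∈ K := by
  have := h.2.1 hx hy (by norm_num : (0:ℝ) ≤ 1/2) (by norm_num : (0:ℝ) ≤ 1/2) (by norm_num)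
  have h2 := h.2.2.1 _ this 2 (by norm_num)
  rw [smul_add, smul_smul, smul_smul] at h2
  norm_num at h2
  exact h2

theorem pc_point {K : Set (Fin d → ℝ)} (h : IsProperCone K)
    {x : Fin d → ℝ} (hx : x ∈ K) (hx' : -x ∈ K) : x = 0 := by
  have : x ∈ K ∩ (-K) := ⟨hx, by simpa using hx'⟩
  rw [h.2.2.2.1] at this; exact this

theorem pc_neg {K : Set (Fin d → ℝ)} (h : IsProperCone K) : IsProperCone (-K) := by
  obtain ⟨h1, h2, h3, h4, h5⟩ := h
  refine ⟨h1.neg, h2.neg, ?_, ?_, ?_⟩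
  · rintro x hx t ht
    rw [mem_neg] at hx ⊢
    have := h3 _ hx t ht
    simpa using this
  · rw [neg_neg, Set.inter_comm, h4]
  · obtain ⟨x, hx⟩ := h5
    have hsub : -(interior K) ⊆ interior (-K) :=
      interior_maximal (Set.neg_subset_neg.mpr interior_subset) isOpen_interior.neg
    exact ⟨-x, hsub (by simpa using hx)⟩

theorem isInvariantCone_neg {𝒜 : Fin m → Matrix (Fin d) (Fin d) ℝ} {K : Set (Fin d → ℝ)}
    (h : IsInvariantCone 𝒜 K) : IsInvariantCone 𝒜 (-K) := by
  refine ⟨pc_neg h.1, fun i x hx => ?_⟩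
  rw [mem_neg] at hx ⊢
  have := h.2 i _ hx
  simpa [Matrix.mulVec_neg] using this


def prodMat (𝒜 : Fin m → Matrix (Fin d) (Fin d) ℝ) (l : List (Fin m)) :
    Matrix (Fin d) (Fin d) ℝ := (l.map 𝒜).prod

theorem prodMat_nil (𝒜 : Fin m → Matrix (Fin d) (Fin d) ℝ) : prodMat 𝒜 [] = 1 := rfl

theorem prodMat_cons (𝒜 : Fin m → Matrix (Fin d) (Fin d) ℝ) (i : Fin m) (l : List (Fin m)) :
    prodMat 𝒜 (i :: l) = 𝒜 i * prodMat 𝒜 l := by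
  simp [prodMat]

def orbitSet (𝒜 : Fin m → Matrix (Fin d) (Fin d) ℝ) (u : Fin d → ℝ) : Set (Fin d → ℝ) :=
  {x | ∃ l : List (Fin m), x = (prodMat 𝒜 l).mulVec u}

theorem self_mem_orbitSet (𝒜 : Fin m → Matrix (Fin d) (Fin d) ℝ) (u : Fin d → ℝ) :
    u ∈ orbitSet 𝒜 u := ⟨[], by simp [prodMat_nil, Matrix.one_mulVec]⟩

theorem mulVec_orbitSet {𝒜 : Fin m → Matrix (Fin d) (Fin d) ℝ} {u x : Fin d → ℝ}
    (hx : x ∈ orbitSet 𝒜 u) (i : Fin m) : (𝒜 i).mulVec x ∈ orbitSet 𝒜 u := by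
  obtain ⟨l, rfl⟩ := hx
  exact ⟨i :: l, by rw [prodMat_cons, ← Matrix.mulVec_mulVec]⟩

-- the NNReal-conic hull
def nnspan (s : Set (Fin d → ℝ)) : Set (Fin d → ℝ) := ↑(Submodule.span ℝ≥0 s)

theorem nnspan_smul {s : Set (Fin d → ℝ)} {x : Fin d → ℝ} (hx : x ∈ nnspan s) {t : ℝ}
    (ht : 0 ≤ t) : t • x ∈ nnspan s := by
  have : t • x = t.toNNReal • x := by
    rw [NNReal.smul_def, Real.coe_toNNReal _ ht]
  rw [this]
  exact Submodule.smul_mem _ _ hx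

theorem nnspan_add {s : Set (Fin d → ℝ)} {x y : Fin d → ℝ} (hx : x ∈ nnspan s)
    (hy : y ∈ nnspan s) : x + y ∈ nnspan s := Submodule.add_mem _ hx hy

theorem nnspan_convex (s : Set (Fin d → ℝ)) : Convex ℝ (nnspan s) := by
  intro x hx y hy a b ha hb _
  exact nnspan_add (nnspan_smul hx ha) (nnspan_smul hy hb)

theorem subset_nnspan (s : Set (Fin d → ℝ)) : s ⊆ nnspan s := Submodule.subset_span

theorem zero_mem_nnspan (s : Set (Fin d → ℝ)) : (0 : Fin d → ℝ) ∈ nnspan s :=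
  Submodule.zero_mem _

-- mapping by a matrix
theorem nnspan_mulVec {s : Set (Fin d → ℝ)} (A : Matrix (Fin d) (Fin d) ℝ)
    (hs : ∀ x ∈ s, A.mulVec x ∈ nnspan s) {x : Fin d → ℝ} (hx : x ∈ nnspan s) :
    A.mulVec x ∈ nnspan s := by
  induction hx using Submodule.span_induction with
  | mem x hxs => exact hs x hxs
  | zero => rw [Matrix.mulVec_zero]; exact zero_mem_nnspan s
  | add x y _ _ ihx ihy => rw [Matrix.mulVec_add]; exact nnspan_add ihx ihy
  | smul t x _ ih =>
      rw [NNReal.smul_def, Matrix.mulVec_smul]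
      exact nnspan_smul ih t.coe_nonneg


-- NEW MATERIAL
def Ccone (𝒜 : Fin m → Matrix (Fin d) (Fin d) ℝ) (u : Fin d → ℝ) : Set (Fin d → ℝ) :=
  closure (nnspan (orbitSet 𝒜 u))

theorem nnspan_subset {s K : Set (Fin d → ℝ)} (hsub : s ⊆ K)
    (h0 : (0:Fin d → ℝ) ∈ K) (hadd : ∀ x ∈ K, ∀ y ∈ K, x + y ∈ K)
    (hsmul : ∀ x ∈ K, ∀ t : ℝ, 0 ≤ t → t • x ∈ K) : nnspan s ⊆ K := by
  intro x hx
  induction hx using Submodule.span_induction with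
  | mem x hxs => exact hsub hxs
  | zero => exact h0
  | add x y _ _ ihx ihy => exact hadd _ ihx _ ihy
  | smul t x _ ih => rw [NNReal.smul_def]; exact hsmul _ ih _ t.coe_nonneg

theorem continuous_mulVec (A : Matrix (Fin d) (Fin d) ℝ) :
    Continuous fun x : Fin d → ℝ => A.mulVec x := by
  have : (fun x : Fin d → ℝ => A.mulVec x) = A.mulVecLin := rfl
  rw [this]
  exact A.mulVecLin.continuous_of_finiteDimensional

theorem orbitSet_subset_cone {𝒜 : Fin m → Matrix (Fin d) (Fin d) ℝ} {K : Set (Fin d → ℝ)}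
    (hK : IsInvariantCone 𝒜 K) {u : Fin d → ℝ} (hu : u ∈ K) : orbitSet 𝒜 u ⊆ K := by
  rintro x ⟨l, rfl⟩
  induction l with
  | nil => simpa [prodMat, Matrix.one_mulVec] using hu
  | cons i l ih =>
      have : prodMat 𝒜 (i :: l) = 𝒜 i * prodMat 𝒜 l := by simp [prodMat]
      rw [this, ← Matrix.mulVec_mulVec]
      exact hK.2 i _ ih

theorem Ccone_subset {𝒜 : Fin m → Matrix (Fin d) (Fin d) ℝ} {K : Set (Fin d → ℝ)}
    (hK : IsInvariantCone 𝒜 K) {u : Fin d → ℝ} (hu : u ∈ K) : Ccone 𝒜 u ⊆ K := by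
  have h0 : (0:Fin d → ℝ) ∈ K := by
    have h4 := hK.1.2.2.2.1
    have : (0 : Fin d → ℝ) ∈ K ∩ (-K) := by rw [h4]; rfl
    exact this.1
  have hadd : ∀ x ∈ K, ∀ y ∈ K, x + y ∈ K := by
    intro x hx y hy
    have := hK.1.2.1 hx hy (by norm_num : (0:ℝ) ≤ 1/2) (by norm_num : (0:ℝ) ≤ 1/2) (by norm_num)
    have h2 := hK.1.2.2.1 _ this 2 (by norm_num)
    rw [smul_add, smul_smul, smul_smul] at h2
    norm_num at h2
    exact h2
  have : nnspan (orbitSet 𝒜 u) ⊆ K :=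
    nnspan_subset (orbitSet_subset_cone hK hu) h0 hadd hK.1.2.2.1
  calc Ccone 𝒜 u ⊆ closure K := closure_mono this
  _ = K := hK.1.1.closure_eq

theorem mem_Ccone_self (𝒜 : Fin m → Matrix (Fin d) (Fin d) ℝ) (u : Fin d → ℝ) :
    u ∈ Ccone 𝒜 u := subset_closure (subset_nnspan _ (self_mem_orbitSet 𝒜 u))

theorem Ccone_mulVec {𝒜 : Fin m → Matrix (Fin d) (Fin d) ℝ} {u : Fin d → ℝ} (i : Fin m)
    {x : Fin d → ℝ} (hx : x ∈ Ccone 𝒜 u) : (𝒜 i).mulVec x ∈ Ccone 𝒜 u := by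
  have hmaps : MapsTo (fun y => (𝒜 i).mulVec y) (nnspan (orbitSet 𝒜 u)) (nnspan (orbitSet 𝒜 u)) :=
    fun y hy => nnspan_mulVec _ (fun z hz => subset_nnspan _ (mulVec_orbitSet hz i)) hy
  have := (continuous_mulVec (𝒜 i)).continuousOn.image_closure (s := nnspan (orbitSet 𝒜 u))
  have himg : (fun y => (𝒜 i).mulVec y) '' Ccone 𝒜 u ⊆ Ccone 𝒜 u := by
    refine subset_trans (image_closure_subset_closure_image (continuous_mulVec (𝒜 i))) ?_
    exact closure_mono (image_subset_iff.mpr hmaps)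
  exact himg ⟨x, hx, rfl⟩

theorem Ccone_convex (𝒜 : Fin m → Matrix (Fin d) (Fin d) ℝ) (u : Fin d → ℝ) :
    Convex ℝ (Ccone 𝒜 u) := (nnspan_convex _).closure

theorem Ccone_closed (𝒜 : Fin m → Matrix (Fin d) (Fin d) ℝ) (u : Fin d → ℝ) :
    IsClosed (Ccone 𝒜 u) := isClosed_closure

theorem Ccone_smul {𝒜 : Fin m → Matrix (Fin d) (Fin d) ℝ} {u : Fin d → ℝ} {x : Fin d → ℝ}
    (hx : x ∈ Ccone 𝒜 u) {t : ℝ} (ht : 0 ≤ t) : t • x ∈ Ccone 𝒜 u := by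
  have hmaps : MapsTo (fun y : Fin d → ℝ => t • y) (nnspan (orbitSet 𝒜 u)) (nnspan (orbitSet 𝒜 u)) :=
    fun y hy => nnspan_smul hy ht
  have hc : Continuous fun y : Fin d → ℝ => t • y := continuous_const_smul t
  have himg : (fun y : Fin d → ℝ => t • y) '' Ccone 𝒜 u ⊆ Ccone 𝒜 u :=
    subset_trans (image_closure_subset_closure_image hc) (closure_mono (image_subset_iff.mpr hmaps))
  exact himg ⟨x, hx, rfl⟩

-- span of orbit is everything
theorem span_orbit_eq_top {𝒜 : Fin m → Matrix (Fin d) (Fin d) ℝ}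
    (hirr : IsIrreducibleFamily 𝒜) {u : Fin d → ℝ} (hu : u ≠ 0) :
    Submodule.span ℝ (orbitSet 𝒜 u) = ⊤ := by
  set V := Submodule.span ℝ (orbitSet 𝒜 u) with hV
  have hinv : ∀ i, ∀ x ∈ V, (𝒜 i).mulVec x ∈ V := by
    intro i x hx
    induction hx using Submodule.span_induction with
    | mem x hxs => exact Submodule.subset_span (mulVec_orbitSet hxs i)
    | zero => rw [Matrix.mulVec_zero]; exact V.zero_mem
    | add x y _ _ ihx ihy => rw [Matrix.mulVec_add]; exact V.add_mem ihx ihy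
    | smul t x _ ih => rw [Matrix.mulVec_smul]; exact V.smul_mem t ih
  rcases hirr V hinv with h | h
  · exfalso
    have : u ∈ V := Submodule.subset_span (self_mem_orbitSet 𝒜 u)
    rw [h] at this
    exact hu (by simpa using this)
  · exact h

theorem Ccone_interior_nonempty {𝒜 : Fin m → Matrix (Fin d) (Fin d) ℝ}
    (hirr : IsIrreducibleFamily 𝒜) {u : Fin d → ℝ} (hu : u ≠ 0) :
    (interior (Ccone 𝒜 u)).Nonempty := by
  rw [(Ccone_convex 𝒜 u).interior_nonempty_iff_affineSpan_eq_top]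
  have h1 : Submodule.span ℝ (Ccone 𝒜 u) = ⊤ := by
    rw [eq_top_iff, ← span_orbit_eq_top hirr hu]
    exact Submodule.span_mono (fun x hx => subset_closure (subset_nnspan _ hx))
  have hne : (Ccone 𝒜 u).Nonempty := ⟨u, mem_Ccone_self 𝒜 u⟩
  rw [AffineSubspace.affineSpan_eq_top_iff_vectorSpan_eq_top_of_nonempty ℝ (Fin d → ℝ) (Fin d → ℝ) hne]
  rw [eq_top_iff, ← h1]
  rw [Submodule.span_le]
  intro x hx
  have : x - 0 ∈ (Ccone 𝒜 u) -ᵥ (Ccone 𝒜 u) :=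
    Set.vsub_mem_vsub hx (subset_closure (zero_mem_nnspan _))
  have hx0 : x ∈ (Ccone 𝒜 u) -ᵥ (Ccone 𝒜 u) := by simpa using this
  rw [vectorSpan_def]
  exact Submodule.subset_span hx0

theorem isInvariantCone_Ccone {𝒜 : Fin m → Matrix (Fin d) (Fin d) ℝ}
    (hirr : IsIrreducibleFamily 𝒜) {K : Set (Fin d → ℝ)} (hK : IsInvariantCone 𝒜 K)
    {u : Fin d → ℝ} (hu : u ∈ K) (hu0 : u ≠ 0) : IsInvariantCone 𝒜 (Ccone 𝒜 u) := by
  have hsub := Ccone_subset hK hu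
  refine ⟨⟨Ccone_closed 𝒜 u, Ccone_convex 𝒜 u, fun x hx t ht => Ccone_smul hx ht, ?_,
    Ccone_interior_nonempty hirr hu0⟩, fun i x hx => Ccone_mulVec i hx⟩
  apply Set.Subset.antisymm
  · intro x hx
    obtain ⟨hx1, hx2⟩ := hx
    have h4 := hK.1.2.2.2.1
    have : x ∈ K ∩ (-K) := ⟨hsub hx1, by rw [Set.mem_neg] at hx2 ⊢; exact hsub hx2⟩
    rw [h4] at this; exact this
  · intro x hx
    rw [Set.mem_singleton_iff] at hx
    subst hx
    have h0 : (0:Fin d → ℝ) ∈ Ccone 𝒜 u := subset_closure (zero_mem_nnspan _)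
    exact ⟨h0, by rw [Set.mem_neg, neg_zero]; exact h0⟩

theorem sum_extend_zero {M : Type*} [AddCommMonoid M] {c n : ℕ} (h : c ≤ n) (f : Fin c → M) :
    ∑ i : Fin n, (if hh : (i:ℕ) < c then f ⟨i, hh⟩ else 0) = ∑ j : Fin c, f j := by
  rw [Fin.sum_univ_eq_sum_range (fun k => if hh : k < c then f ⟨k, hh⟩ else 0) n]
  have h2 : ∑ j : Fin c, f j = ∑ k ∈ Finset.range c, (if hh : k < c then f ⟨k, hh⟩ else 0) := by
    rw [← Fin.sum_univ_eq_sum_range (fun k => if hh : k < c then f ⟨k, hh⟩ else 0) c]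
    apply Finset.sum_congr rfl
    intro j _
    rw [dif_pos j.2]
  rw [h2]
  symm
  apply Finset.sum_subset (Finset.range_subset_range.mpr h)
  intro k _ hk
  rw [Finset.mem_range] at hk
  exact dif_neg hk

theorem isCompact_convexHull' {S : Set (Fin d → ℝ)} (hS : IsCompact S) (hne : S.Nonempty) :
    IsCompact (convexHull ℝ S) := by
  classical
  obtain ⟨s0, hs0⟩ := hne
  set n := d + 1 with hn
  set D : Set ((Fin n → ℝ) × (Fin n → Fin d → ℝ)) :=
    (stdSimplex ℝ (Fin n)) ×ˢ (Set.univ.pi fun _ => S) with hD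
  have hDcomp : IsCompact D := (isCompact_stdSimplex _ _).prod (isCompact_univ_pi fun _ => hS)
  set g : (Fin n → ℝ) × (Fin n → Fin d → ℝ) → (Fin d → ℝ) :=
    fun p => ∑ i : Fin n, p.1 i • p.2 i with hg
  have hgc : Continuous g := by
    refine continuous_finset_sum _ fun i _ => Continuous.fun_smul ?_ ?_
    · exact (continuous_apply i).comp continuous_fst
    · exact (continuous_apply i).comp continuous_snd
  have himg : convexHull ℝ S = g '' D := by
    apply Set.Subset.antisymm
    · intro x hx
      rw [convexHull_eq_union] at hx
      simp only [Set.mem_iUnion] at hx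
      obtain ⟨t, hts, hai, hxt⟩ := hx
      have hcard : t.card ≤ n := by
        have h1 := hai.card_le_finrank_succ
        simp only [Fintype.card_coe] at h1
        have h2 : Module.finrank ℝ ↥(vectorSpan ℝ (Set.range (Subtype.val : t → Fin d → ℝ)))
            ≤ Module.finrank ℝ (Fin d → ℝ) := Submodule.finrank_le _
        have hfr : Module.finrank ℝ (Fin d → ℝ) = d := by simp
        omega
      rw [Finset.convexHull_eq] at hxt
      obtain ⟨w, hw0, hw1, hcm⟩ := hxt
      let e := t.equivFin
      set z : Fin n → Fin d → ℝ := fun i =>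
        if h : (i : ℕ) < t.card then (e.symm ⟨i, h⟩ : Fin d → ℝ) else s0 with hz
      set ww : Fin n → ℝ := fun i =>
        if h : (i : ℕ) < t.card then w (e.symm ⟨i, h⟩) else 0 with hww
      have hwsum : ∑ i : Fin n, ww i = 1 := by
        have h1 : ∑ i : Fin n, ww i = ∑ j : Fin t.card, w (e.symm j) :=
          sum_extend_zero hcard (fun j => w (e.symm j))
        have h2 : ∑ j : Fin t.card, w (e.symm j) = ∑ a : t, w a :=
          Equiv.sum_comp e.symm (fun a : t => w ↑a)
        have h3 : ∑ a : t, w (↑a : Fin d → ℝ) = ∑ a ∈ t, w a := Finset.sum_coe_sort t w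
        rw [h1, h2, h3, hw1]
      refine ⟨(ww, z), ⟨⟨fun i => ?_, hwsum⟩, fun i _ => ?_⟩, ?_⟩
      · by_cases h : (i:ℕ) < t.card
        · simp only [hww, dif_pos h]
          exact hw0 _ (e.symm ⟨i, h⟩).2
        · simp only [hww, dif_neg h]; exact le_refl 0
      · by_cases h : (i:ℕ) < t.card
        · simp only [hz, dif_pos h]; exact hts (e.symm ⟨i, h⟩).2
        · simp only [hz, dif_neg h]; exact hs0
      · -- g (ww, z) = x
        have hterm : ∀ i : Fin n, ww i • z i =
            (if h : (i:ℕ) < t.card then w (e.symm ⟨i,h⟩) • (e.symm ⟨i,h⟩ : Fin d → ℝ) else 0) := by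
          intro i
          by_cases h : (i:ℕ) < t.card
          · simp only [hww, hz, dif_pos h]
          · simp only [hww, hz, dif_neg h, zero_smul]
        have h1 : g (ww, z) = ∑ j : Fin t.card, w (e.symm j) • (e.symm j : Fin d → ℝ) := by
          simp only [hg]
          rw [Finset.sum_congr rfl (fun i _ => hterm i)]
          exact sum_extend_zero hcard (fun j => w (e.symm j) • (e.symm j : Fin d → ℝ))
        have h2 : ∑ j : Fin t.card, w (e.symm j) • (e.symm j : Fin d → ℝ)
            = ∑ a : t, w ↑a • (↑a : Fin d → ℝ) :=
          Equiv.sum_comp e.symm (fun a : t => w ↑a • (↑a : Fin d → ℝ))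
        have h3 : ∑ a : t, w (↑a : Fin d → ℝ) • (↑a : Fin d → ℝ) = ∑ a ∈ t, w a • a :=
          Finset.sum_coe_sort t (fun a => w a • a)
        have h4 : t.centerMass w id = x := hcm
        rw [Finset.centerMass, hw1, inv_one, one_smul] at h4
        rw [h1, h2, h3]
        simpa using h4
    · rintro x ⟨⟨ww, z⟩, ⟨hwD, hzD⟩, rfl⟩
      have hmem : ∀ i ∈ Finset.univ, z i ∈ S := fun i _ => hzD i (Set.mem_univ i)
      have hw0 : ∀ i ∈ Finset.univ (α := Fin n), 0 ≤ ww i := fun i _ => hwD.1 i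
      have hwsum : ∑ i : Fin n, ww i = 1 := hwD.2
      have := Finset.centerMass_mem_convexHull (Finset.univ) hw0 (by rw [hwsum]; norm_num) hmem
      rw [Finset.centerMass, hwsum, inv_one, one_smul] at this
      exact this
  rw [himg]
  exact hDcomp.image hgc

-- functional representation
theorem clm_eq_dot (f : (Fin d → ℝ) →L[ℝ] ℝ) :
    ∃ w : Fin d → ℝ, ∀ y, f y = w ⬝ᵥ y := by
  refine ⟨fun j => f (Pi.single j 1), fun y => ?_⟩
  have hy : y = ∑ i : Fin d, y i • (Pi.single i (1:ℝ) : Fin d → ℝ) := by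
    ext j
    simp [Pi.single_apply, Finset.sum_apply]
  calc f y = f (∑ i : Fin d, y i • (Pi.single i (1:ℝ) : Fin d → ℝ)) := by rw [← hy]
  _ = ∑ i : Fin d, y i * f (Pi.single i 1) := by
      rw [map_sum]; congr 1; ext i; rw [f.map_smul, smul_eq_mul]
  _ = (fun j => f (Pi.single j 1)) ⬝ᵥ y := by
      rw [dotProduct]; congr 1; ext i; ring

theorem dual_closed (K : Set (Fin d → ℝ)) : IsClosed (dualConeSet K) := by
  have : dualConeSet K = ⋂ y ∈ K, {x : Fin d → ℝ | 0 ≤ x ⬝ᵥ y} := by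
    ext x; simp [dualConeSet, Set.mem_iInter]
  rw [this]
  refine isClosed_biInter fun y _ => ?_
  have hc : Continuous fun x : Fin d → ℝ => x ⬝ᵥ y := by
    unfold dotProduct
    exact continuous_finset_sum _ fun i _ => (continuous_apply i).mul continuous_const
  exact isClosed_le continuous_const hc

theorem dual_mem_smul {K : Set (Fin d → ℝ)} {x : Fin d → ℝ} (hx : x ∈ dualConeSet K)
    {t : ℝ} (ht : 0 ≤ t) : t • x ∈ dualConeSet K := by
  intro y hy
  rw [smul_dotProduct]
  exact mul_nonneg ht (hx y hy)

theorem dual_convex (K : Set (Fin d → ℝ)) : Convex ℝ (dualConeSet K) := by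
  intro x hx y hy a b ha hb _
  intro z hz
  rw [add_dotProduct, smul_dotProduct, smul_dotProduct]
  have := hx z hz; have := hy z hz
  positivity

-- bidual
theorem bidual_eq {K : Set (Fin d → ℝ)} (hcl : IsClosed K) (hcv : Convex ℝ K)
    (h0 : (0:Fin d → ℝ) ∈ K) (hsm : ∀ x ∈ K, ∀ t : ℝ, 0 ≤ t → t • x ∈ K) :
    dualConeSet (dualConeSet K) = K := by
  apply Set.Subset.antisymm
  · intro x hx
    by_contra hxK
    obtain ⟨f, u, hfu, hK⟩ := geometric_hahn_banach_point_closed hcv hcl hxK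
    have hu0 : u < 0 := by simpa using hK 0 h0
    have hfnn : ∀ y ∈ K, 0 ≤ f y := by
      intro y hy
      by_contra hneg
      push_neg at hneg
      obtain ⟨t, ht0, ht⟩ : ∃ t : ℝ, 0 ≤ t ∧ t * f y < u := by
        refine ⟨(u - 1) / f y, ?_, ?_⟩
        · exact div_nonneg_iff.mpr (Or.inr ⟨by linarith, le_of_lt hneg⟩)
        · rw [div_mul_eq_mul_div, mul_div_assoc, div_self (ne_of_lt hneg), mul_one]; linarith
      have := hK _ (hsm y hy t ht0)
      rw [f.map_smul, smul_eq_mul] at this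
      linarith
    obtain ⟨w, hw⟩ := clm_eq_dot f
    have hwd : w ∈ dualConeSet K := fun y hy => by rw [← hw]; exact hfnn y hy
    have := hx w hwd
    rw [dotProduct_comm, ← hw] at this
    linarith
  · intro y hy w hw
    rw [dotProduct_comm]
    exact hw y hy

theorem sum_mem_cone {K : Set (Fin d → ℝ)} (h0 : (0:Fin d → ℝ) ∈ K)
    (hadd : ∀ x ∈ K, ∀ y ∈ K, x + y ∈ K) {ι : Type*} (t : Finset ι) (f : ι → Fin d → ℝ)
    (hf : ∀ i ∈ t, f i ∈ K) : (∑ i ∈ t, f i) ∈ K := by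
  classical
  induction t using Finset.induction with
  | empty => simpa using h0
  | insert _ _ hnotmem ih =>
      rw [Finset.sum_insert hnotmem]
      exact hadd _ (hf _ (Finset.mem_insert_self _ _)) _
        (ih fun i hi => hf i (Finset.mem_insert_of_mem hi))

-- strictly positive functional on a proper cone, quantitative
theorem exists_strict_pos_functional {K : Set (Fin d → ℝ)} (h : IsProperCone K) :
    ∃ (w : Fin d → ℝ) (δ : ℝ), 0 < δ ∧ ∀ y ∈ K, δ * ‖y‖ ≤ w ⬝ᵥ y := by
  classical
  have hbase : ∀ y ∈ K, y ≠ 0 → ‖y‖⁻¹ • y ∈ K ∩ Metric.sphere (0:Fin d → ℝ) 1 := by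
    intro y hy hy0
    refine ⟨h.2.2.1 y hy _ (inv_nonneg.mpr (norm_nonneg y)), ?_⟩
    simp [norm_smul, abs_of_nonneg (inv_nonneg.mpr (norm_nonneg y)),
      inv_mul_cancel₀ (norm_ne_zero_iff.mpr hy0)]
  by_cases hS : (K ∩ Metric.sphere (0:Fin d → ℝ) 1).Nonempty
  swap
  · refine ⟨0, 1, one_pos, fun y hy => ?_⟩
    by_cases hy0 : y = 0
    · simp [hy0]
    · exact absurd (hbase y hy hy0) (fun hc => hS ⟨_, hc⟩)
  · set S := K ∩ Metric.sphere (0:Fin d → ℝ) 1 with hSdef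
    set C := convexHull ℝ S with hC
    have hScomp : IsCompact S := (isCompact_sphere 0 1).inter_left h.1
    have hCcomp : IsCompact C := isCompact_convexHull' hScomp hS
    have h0C : (0:Fin d → ℝ) ∉ C := by
      intro h0
      rw [hC, convexHull_eq] at h0
      obtain ⟨ι, t, wt, z, hw0, hw1, hz, hcm⟩ := h0
      rw [Finset.centerMass, hw1, inv_one, one_smul] at hcm
      obtain ⟨i0, hi0t, hi0⟩ : ∃ i0 ∈ t, 0 < wt i0 := by
        by_contra hc
        push_neg at hc
        have : ∑ i ∈ t, wt i = 0 :=
          Finset.sum_eq_zero fun i hi => le_antisymm (hc i hi) (hw0 i hi)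
        rw [hw1] at this; norm_num at this
      have hsum0 : wt i0 • z i0 + ∑ i ∈ t.erase i0, wt i • z i = 0 := by
        rw [Finset.add_sum_erase t (fun i => wt i • z i) hi0t]; exact hcm
      have hrestK : (∑ i ∈ t.erase i0, wt i • z i) ∈ K := by
        refine sum_mem_cone (pc_zero h) (fun a ha b hb => pc_add h ha hb) _ _ ?_
        intro i hi
        exact h.2.2.1 _ (hz i (Finset.mem_of_mem_erase hi)).1 _ (hw0 i (Finset.mem_of_mem_erase hi))
      have hmemK : wt i0 • z i0 ∈ K := h.2.2.1 _ (hz i0 hi0t).1 _ (le_of_lt hi0)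
      have hnegK : -(wt i0 • z i0) ∈ K := by
        have heq : (∑ i ∈ t.erase i0, wt i • z i) = -(wt i0 • z i0) :=
          eq_neg_of_add_eq_zero_right hsum0
        rw [← heq]; exact hrestK
      have hz0 : wt i0 • z i0 = 0 := pc_point h hmemK hnegK
      have : z i0 = 0 := by
        rcases smul_eq_zero.mp hz0 with hc | hc
        · exact absurd hc (ne_of_gt hi0)
        · exact hc
      have hnorm : ‖z i0‖ = 1 := by
        have := (hz i0 hi0t).2
        simpa [hSdef] using this
      rw [this] at hnorm; simp at hnorm
    obtain ⟨f, u, hfu, hf0⟩ :=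
      geometric_hahn_banach_closed_point (convex_convexHull ℝ S) hCcomp.isClosed h0C
    have hu0 : u < 0 := by simpa using hf0
    obtain ⟨w, hw⟩ := clm_eq_dot (-f)
    refine ⟨w, -u, by linarith, fun y hy => ?_⟩
    by_cases hy0 : y = 0
    · simp [hy0]
    · have hyS : ‖y‖⁻¹ • y ∈ S := hbase y hy hy0
      have hfy : f (‖y‖⁻¹ • y) < u := hfu _ (subset_convexHull ℝ S hyS)
      have hwy : -u < w ⬝ᵥ (‖y‖⁻¹ • y) := by
        have := hw (‖y‖⁻¹ • y)
        simp only [ContinuousLinearMap.neg_apply] at this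
        rw [← this]; linarith
      have hns : w ⬝ᵥ (‖y‖⁻¹ • y) = ‖y‖⁻¹ * (w ⬝ᵥ y) := by
        rw [dotProduct_smul]; rfl
      have hnpos : 0 < ‖y‖ := norm_pos_iff.mpr hy0
      rw [hns] at hwy
      calc (-u) * ‖y‖ ≤ (‖y‖⁻¹ * (w ⬝ᵥ y)) * ‖y‖ := by nlinarith
      _ = w ⬝ᵥ y := by field_simp

-- dual cone of a proper cone is proper
theorem dotProduct_le_norm (x y : Fin d → ℝ) : |x ⬝ᵥ y| ≤ (d : ℝ) * ‖x‖ * ‖y‖ := by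
  calc |x ⬝ᵥ y| ≤ ∑ i : Fin d, |x i * y i| := Finset.abs_sum_le_sum_abs _ _
  _ ≤ ∑ _i : Fin d, ‖x‖ * ‖y‖ := by
      refine Finset.sum_le_sum fun i _ => ?_
      rw [abs_mul]
      have hx := norm_le_pi_norm x i
      have hy := norm_le_pi_norm y i
      simp only [Real.norm_eq_abs] at hx hy
      exact mul_le_mul hx hy (abs_nonneg _) (norm_nonneg _)
  _ = (d : ℝ) * ‖x‖ * ‖y‖ := by
      rw [Finset.sum_const, Finset.card_univ, Fintype.card_fin, nsmul_eq_mul]; ring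

theorem dual_interior_nonempty {K : Set (Fin d → ℝ)} (h : IsProperCone K) :
    (interior (dualConeSet K)).Nonempty := by
  obtain ⟨w, δ, hδ, hwK⟩ := exists_strict_pos_functional h
  refine ⟨w, ?_⟩
  rw [mem_interior]
  refine ⟨Metric.ball w (δ / (d + 1)), ?_, Metric.isOpen_ball,
    Metric.mem_ball_self (by positivity)⟩
  intro w' hw' y hy
  have hdist : ‖w' - w‖ < δ / (d+1) := by
    rw [Metric.mem_ball, dist_eq_norm] at hw'; exact hw'
  have h1 : |(w' - w) ⬝ᵥ y| ≤ (d : ℝ) * ‖w' - w‖ * ‖y‖ := dotProduct_le_norm _ _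
  have h2 : w' ⬝ᵥ y = w ⬝ᵥ y + (w' - w) ⬝ᵥ y := by
    rw [← add_dotProduct]; ring_nf
  have h3 : (d:ℝ) * ‖w' - w‖ * ‖y‖ ≤ (d:ℝ) * (δ/(d+1)) * ‖y‖ := by
    have hd0 : (0:ℝ) ≤ (d:ℝ) := Nat.cast_nonneg d
    have hyn : (0:ℝ) ≤ ‖y‖ := norm_nonneg y
    have := mul_le_mul_of_nonneg_left (le_of_lt hdist) hd0
    exact mul_le_mul_of_nonneg_right this hyn
  have h4 : (d:ℝ) * (δ/(d+1)) ≤ δ := by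
    rw [mul_div_assoc']
    rw [div_le_iff₀ (by positivity)]
    nlinarith [Nat.cast_nonneg (α := ℝ) d]
  have h5 := hwK y hy
  have habs := abs_le.mp h1
  have hn : (0:ℝ) ≤ ‖y‖ := norm_nonneg y
  have h6 : (d:ℝ)*(δ/(d+1))*‖y‖ ≤ δ*‖y‖ := mul_le_mul_of_nonneg_right h4 hn
  linarith [habs.1, habs.2]

theorem dual_pointed {K : Set (Fin d → ℝ)} (h : IsProperCone K) {x : Fin d → ℝ}
    (hx : x ∈ dualConeSet K) (hx' : -x ∈ dualConeSet K) : x = 0 := by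
  obtain ⟨z, hz⟩ := h.2.2.2.2
  have hzK : z ∈ K := interior_subset hz
  have horth : ∀ y ∈ K, x ⬝ᵥ y = 0 := by
    intro y hy
    have h1 := hx y hy
    have h2 := hx' y hy
    rw [neg_dotProduct] at h2
    linarith
  -- z + ε x ∈ K for small ε
  by_cases hx0 : x = 0
  · exact hx0
  · exfalso
    obtain ⟨ε, hε, hball⟩ := Metric.isOpen_iff.mp isOpen_interior z hz
    set yy := z + (ε / (2 * ‖x‖)) • x with hyy
    have hxnorm : 0 < ‖x‖ := norm_pos_iff.mpr hx0
    have hyyK : yy ∈ K := by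
      apply interior_subset
      apply hball
      rw [Metric.mem_ball, hyy, dist_eq_norm]
      have : z + (ε / (2 * ‖x‖)) • x - z = (ε / (2 * ‖x‖)) • x := by abel
      rw [this, norm_smul]
      rw [Real.norm_eq_abs, abs_of_pos (by positivity)]
      have heq : ε / (2 * ‖x‖) * ‖x‖ = ε / 2 := by field_simp
      rw [heq]
      linarith
    have h1 := horth z hzK
    have h2 := horth yy hyyK
    rw [hyy, dotProduct_add, h1, zero_add, dotProduct_smul, smul_eq_mul] at h2
    have hxx : x ⬝ᵥ x = 0 := by
      have hc : ε ≠ 0 := ne_of_gt hε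
      field_simp at h2
      rw [mul_zero] at h2
      rcases mul_eq_zero.mp h2 with h2 | h2
      · exact absurd h2 hc
      · exact h2
    have : x = 0 := by
      have hsum : ∑ i : Fin d, x i * x i = 0 := hxx
      ext i
      have hnn : ∀ j ∈ Finset.univ, (0:ℝ) ≤ x j * x j := fun j _ => mul_self_nonneg _
      have := (Finset.sum_eq_zero_iff_of_nonneg hnn).mp hsum i (Finset.mem_univ i)
      have := mul_self_eq_zero.mp this
      simpa using this
    exact hx0 this


theorem mat_sum_mulVec {ι : Type*} (s : Finset ι) (M : ι → Matrix (Fin d) (Fin d) ℝ)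
    (y : Fin d → ℝ) : (∑ i ∈ s, M i).mulVec y = ∑ i ∈ s, (M i).mulVec y := by
  classical
  induction s using Finset.cons_induction with
  | empty => simp [Matrix.zero_mulVec]
  | cons a s ha ih => rw [Finset.sum_cons, Finset.sum_cons, Matrix.add_mulVec, ih]


-- interior + cone element
theorem int_add_mem {K : Set (Fin d → ℝ)} (hadd : ∀ x ∈ K, ∀ y ∈ K, x + y ∈ K)
    {x y : Fin d → ℝ} (hx : x ∈ interior K) (hy : y ∈ K) : x + y ∈ interior K := by
  have hopen : IsOpen ((fun z => z + y) '' interior K) :=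
    (isOpenMap_add_right y) _ isOpen_interior
  have hsub : ((fun z => z + y) '' interior K) ⊆ K := by
    rintro _ ⟨z, hz, rfl⟩
    exact hadd z (interior_subset hz) y hy
  have : x + y ∈ (fun z => z + y) '' interior K := ⟨x, hx, rfl⟩
  exact mem_interior.mpr ⟨_, hsub, hopen, this⟩

theorem smul_interior_mem {K : Set (Fin d → ℝ)}
    (hsm : ∀ x ∈ K, ∀ t : ℝ, 0 ≤ t → t • x ∈ K) {x : Fin d → ℝ}
    (hx : x ∈ interior K) {c : ℝ} (hc : 0 < c) : c • x ∈ interior K := by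
  have hopen : IsOpen ((fun z : Fin d → ℝ => c • z) '' interior K) :=
    (isOpenMap_smul₀ (ne_of_gt hc)) _ isOpen_interior
  have hsub : ((fun z : Fin d → ℝ => c • z) '' interior K) ⊆ K := by
    rintro _ ⟨z, hz, rfl⟩
    exact hsm z (interior_subset hz) c (le_of_lt hc)
  exact mem_interior.mpr ⟨_, hsub, hopen, ⟨x, hx, rfl⟩⟩

-- a matrix that preserves all invariant cones and sends x into the interior of K
theorem exists_Tx {𝒜 : Fin m → Matrix (Fin d) (Fin d) ℝ} (hirr : IsIrreducibleFamily 𝒜)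
    {K : Set (Fin d → ℝ)} (hK : IsInvariantCone 𝒜 K) {x : Fin d → ℝ} (hx : x ∈ K)
    (hx0 : x ≠ 0) :
    ∃ T : Matrix (Fin d) (Fin d) ℝ,
      (∀ K' : Set (Fin d → ℝ), IsInvariantCone 𝒜 K' → ∀ y ∈ K', T.mulVec y ∈ K') ∧
      T.mulVec x ∈ interior K := by
  classical
  obtain ⟨p, hp⟩ := Ccone_interior_nonempty hirr hx0
  -- find q in the nnspan within the interior
  have hpcl : p ∈ closure (nnspan (orbitSet 𝒜 x)) := interior_subset hp
  have := mem_closure_iff.mp hpcl _ isOpen_interior hp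
  obtain ⟨q, hqint, hq⟩ := this
  have hqK : q ∈ interior K :=
    interior_mono (Ccone_subset hK hx) hqint
  rw [nnspan, SetLike.mem_coe] at hq
  rw [Submodule.mem_span_set] at hq
  obtain ⟨c, hsupp, hsum⟩ := hq
  -- choose list for each element of the support
  have hchoice : ∀ e ∈ c.support, ∃ l : List (Fin m), (e : Fin d → ℝ) = (prodMat 𝒜 l).mulVec x :=
    fun e he => hsupp he
  choose ll hll using hchoice
  set T : Matrix (Fin d) (Fin d) ℝ :=
    ∑ e ∈ c.support.attach, ((c e : ℝ) • prodMat 𝒜 (ll e e.2)) with hT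
  have hTmul : ∀ y : Fin d → ℝ, T.mulVec y
      = ∑ e ∈ c.support.attach, (c e : ℝ) • (prodMat 𝒜 (ll e e.2)).mulVec y := by
    intro y
    rw [hT, mat_sum_mulVec]
    congr 1
    ext e
    rw [Matrix.smul_mulVec]
  refine ⟨T, ?_, ?_⟩
  · intro K' hK' y hy
    rw [hTmul]
    refine sum_mem_cone (pc_zero hK'.1) (fun a ha b hb => pc_add hK'.1 ha hb) _ _ ?_
    intro e _
    refine hK'.1.2.2.1 _ ?_ _ (c e).coe_nonneg
    exact orbitSet_subset_cone hK' hy ⟨ll e e.2, rfl⟩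
  · rw [hTmul]
    have : ∑ e ∈ c.support.attach, (c e : ℝ) • (prodMat 𝒜 (ll e e.2)).mulVec x = q := by
      rw [← hsum]
      rw [Finsupp.sum]
      rw [← Finset.sum_attach c.support (fun e => c e • e)]
      congr 1
      ext e
      rw [← hll e e.2, NNReal.smul_def]
    rw [this]
    exact hqK

-- the strongly positive operator
theorem exists_strongpos {𝒜 : Fin m → Matrix (Fin d) (Fin d) ℝ} (hirr : IsIrreducibleFamily 𝒜)
    {K : Set (Fin d → ℝ)} (hK : IsInvariantCone 𝒜 K) :
    ∃ B : Matrix (Fin d) (Fin d) ℝ,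
      (∀ K' : Set (Fin d → ℝ), IsInvariantCone 𝒜 K' → ∀ y ∈ K', B.mulVec y ∈ K') ∧
      (∀ y ∈ K, y ≠ 0 → B.mulVec y ∈ interior K) := by
  classical
  set Sb := K ∩ Metric.sphere (0 : Fin d → ℝ) 1 with hSb
  have hSbcomp : IsCompact Sb := (isCompact_sphere 0 1).inter_left hK.1.1
  -- for each x in Sb choose T_x
  have hTx : ∀ x : Fin d → ℝ, x ∈ Sb → ∃ T : Matrix (Fin d) (Fin d) ℝ,
      (∀ K' : Set (Fin d → ℝ), IsInvariantCone 𝒜 K' → ∀ y ∈ K', T.mulVec y ∈ K') ∧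
      T.mulVec x ∈ interior K := by
    intro x hxSb
    have hx0 : x ≠ 0 := by
      intro hc
      rw [hc] at hxSb
      have := hxSb.2
      simp at this
    exact exists_Tx hirr hK hxSb.1 hx0
  choose! T hTprop hTint using hTx
  -- open cover
  have hcover : Sb ⊆ ⋃ x ∈ Sb, ((T x).mulVec ⁻¹' interior K) := by
    intro x hx
    exact Set.mem_biUnion hx (hTint x hx)
  obtain ⟨t, hts, htfin, htcov⟩ := hSbcomp.elim_finite_subcover_image
    (fun x _ => (continuous_mulVec (T x)).isOpen_preimage _ isOpen_interior) hcover
  set B : Matrix (Fin d) (Fin d) ℝ := ∑ x ∈ htfin.toFinset, T x with hB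
  have hBmul : ∀ y, B.mulVec y = ∑ x ∈ htfin.toFinset, (T x).mulVec y := by
    intro y; rw [hB, mat_sum_mulVec]
  have hBpres : ∀ K' : Set (Fin d → ℝ), IsInvariantCone 𝒜 K' → ∀ y ∈ K', B.mulVec y ∈ K' := by
    intro K' hK' y hy
    rw [hBmul]
    refine sum_mem_cone (pc_zero hK'.1) (fun a ha b hb => pc_add hK'.1 ha hb) _ _ ?_
    intro x hxt
    have hxSb : x ∈ Sb := hts (htfin.mem_toFinset.mp hxt)
    exact hTprop x hxSb K' hK' y hy
  refine ⟨B, hBpres, ?_⟩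
  intro y hy hy0
  have hynorm : 0 < ‖y‖ := norm_pos_iff.mpr hy0
  set yh := ‖y‖⁻¹ • y with hyh
  have hyhSb : yh ∈ Sb := by
    constructor
    · exact hK.1.2.2.1 y hy _ (inv_nonneg.mpr (norm_nonneg y))
    · simp [hyh, norm_smul, abs_of_pos (inv_pos.mpr hynorm),
        inv_mul_cancel₀ (ne_of_gt hynorm)]
  obtain ⟨x0, hx0t, hx0⟩ : ∃ x0 ∈ htfin.toFinset, (T x0).mulVec yh ∈ interior K := by
    have hmem := htcov hyhSb
    rw [Set.mem_iUnion₂] at hmem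
    obtain ⟨x0, hx0t, hx0⟩ := hmem
    exact ⟨x0, htfin.mem_toFinset.mpr hx0t, hx0⟩
  have hBy : B.mulVec yh ∈ interior K := by
    rw [hBmul]
    rw [← Finset.add_sum_erase _ _ hx0t]
    refine int_add_mem (fun a ha b hb => pc_add hK.1 ha hb) hx0 ?_
    refine sum_mem_cone (pc_zero hK.1) (fun a ha b hb => pc_add hK.1 ha hb) _ _ ?_
    intro x hxt
    have hxSb : x ∈ Sb := hts (htfin.mem_toFinset.mp (Finset.mem_of_mem_erase hxt))
    exact hTprop x hxSb K hK yh hyhSb.1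
  have : B.mulVec y = ‖y‖ • B.mulVec yh := by
    rw [hyh, Matrix.mulVec_smul, smul_smul, mul_inv_cancel₀ (ne_of_gt hynorm), one_smul]
  rw [this]
  exact smul_interior_mem hK.1.2.2.1 hBy hynorm

theorem zero_not_mem_interior {K : Set (Fin d → ℝ)} (h : IsProperCone K)
    {y0 : Fin d → ℝ} (hy0 : y0 ∈ K) (hy00 : y0 ≠ 0) : (0 : Fin d → ℝ) ∉ interior K := by
  intro h0
  obtain ⟨ε, hε, hball⟩ := Metric.isOpen_iff.mp isOpen_interior 0 h0
  have hny : 0 < ‖y0‖ := norm_pos_iff.mpr hy00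
  have hmem : -( (ε / (2 * ‖y0‖)) • y0) ∈ K := by
    apply interior_subset
    apply hball
    rw [Metric.mem_ball, dist_eq_norm, sub_zero, norm_neg, norm_smul, Real.norm_eq_abs,
      abs_of_pos (by positivity)]
    have : ε / (2 * ‖y0‖) * ‖y0‖ = ε / 2 := by field_simp
    rw [this]; linarith
  have hmem2 : (ε / (2 * ‖y0‖)) • y0 ∈ K := h.2.2.1 _ hy0 _ (by positivity)
  have := pc_point h hmem2 hmem
  have : y0 = 0 := by
    rcases smul_eq_zero.mp this with hc | hc
    · exact absurd hc (by positivity)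
    · exact hc
  exact hy00 this

theorem exists_eigenvector {K : Set (Fin d → ℝ)} (hK : IsProperCone K)
    {y0 : Fin d → ℝ} (hy0K : y0 ∈ K) (hy00 : y0 ≠ 0)
    {B : Matrix (Fin d) (Fin d) ℝ}
    (hBpos : ∀ y ∈ K, y ≠ 0 → B.mulVec y ∈ interior K) :
    ∃ (v : Fin d → ℝ) (lam : ℝ), v ∈ interior K ∧ v ∈ K ∧ v ≠ 0 ∧ 0 < lam ∧
      B.mulVec v = lam • v := by
  classical
  have hBK : ∀ y ∈ K, B.mulVec y ∈ K := by
    intro y hy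
    by_cases hy0 : y = 0
    · rw [hy0, Matrix.mulVec_zero]; exact pc_zero hK
    · exact interior_subset (hBpos y hy hy0)
  set Sb := K ∩ Metric.sphere (0 : Fin d → ℝ) 1 with hSb
  have hSbcomp : IsCompact Sb := (isCompact_sphere 0 1).inter_left hK.1
  have hSbne : Sb.Nonempty := by
    refine ⟨‖y0‖⁻¹ • y0, hK.2.2.1 _ hy0K _ (inv_nonneg.mpr (norm_nonneg _)), ?_⟩
    have : 0 < ‖y0‖ := norm_pos_iff.mpr hy00
    simp [norm_smul, abs_of_pos (inv_pos.mpr this), inv_mul_cancel₀ (ne_of_gt this)]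
  have hSb0 : ∀ x ∈ Sb, x ≠ 0 := by
    intro x hx hc
    rw [hc] at hx
    have := hx.2
    simp at this
  set E := {t : ℝ | 0 ≤ t ∧ ∃ x ∈ Sb, B.mulVec x - t • x ∈ K} with hE
  have hEne : (0:ℝ) ∈ E := by
    obtain ⟨x, hx⟩ := hSbne
    exact ⟨le_refl 0, x, hx, by rw [zero_smul, sub_zero]; exact hBK x hx.1⟩
  -- bound
  obtain ⟨w, δ, hδ, hw⟩ := exists_strict_pos_functional hK
  set CB := (LinearMap.toContinuousLinearMap (B.mulVecLin)) with hCB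
  have hEbdd : ∀ t ∈ E, t ≤ (d:ℝ) * ‖w‖ * ‖CB‖ / δ := by
    rintro t ⟨ht0, x, hxSb, hxK⟩
    have h1 : δ * ‖B.mulVec x - t • x‖ ≤ w ⬝ᵥ (B.mulVec x - t • x) := hw _ hxK
    have h2 : w ⬝ᵥ (B.mulVec x - t • x) = w ⬝ᵥ B.mulVec x - t * (w ⬝ᵥ x) := by
      rw [dotProduct_sub, dotProduct_smul, smul_eq_mul]
    have h3 : t * (w ⬝ᵥ x) ≤ w ⬝ᵥ B.mulVec x := by
      have := norm_nonneg (B.mulVec x - t • x)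
      nlinarith
    have h4 : δ * ‖x‖ ≤ w ⬝ᵥ x := hw x hxSb.1
    have hx1 : ‖x‖ = 1 := by simpa using hxSb.2
    rw [hx1, mul_one] at h4
    have h5 : w ⬝ᵥ B.mulVec x ≤ (d:ℝ) * ‖w‖ * ‖B.mulVec x‖ :=
      le_trans (le_abs_self _) (dotProduct_le_norm w _)
    have h6 : ‖B.mulVec x‖ ≤ ‖CB‖ := by
      have := CB.le_opNorm x
      rw [hx1, mul_one] at this
      exact this
    have h7 : t * δ ≤ (d:ℝ) * ‖w‖ * ‖CB‖ := by
      have hd : (0:ℝ) ≤ (d:ℝ) * ‖w‖ := by positivity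
      nlinarith
    calc t = t * δ / δ := by field_simp
    _ ≤ (d:ℝ) * ‖w‖ * ‖CB‖ / δ := by
        gcongr
  -- sup
  have hbddAbove : BddAbove E := ⟨_, fun t ht => hEbdd t ht⟩
  set lam := sSup E with hlam
  have hlam0 : 0 ≤ lam := le_csSup hbddAbove hEne
  -- attainment
  obtain ⟨x', hx'Sb, hx'K⟩ : ∃ x ∈ Sb, B.mulVec x - lam • x ∈ K := by
    -- choose a sequence t_n → lam with witnesses
    have hseq : ∀ n : ℕ, ∃ t ∈ E, lam - 1/(n+1) < t := by
      intro n
      have h1 : lam - 1/(n+1) < lam := by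
        have : (0:ℝ) < 1/(n+1) := by positivity
        linarith
      obtain ⟨t, htE, htlt⟩ := exists_lt_of_lt_csSup ⟨0, hEne⟩ h1
      exact ⟨t, htE, htlt⟩
    choose tn htnE htngt using hseq
    have htn_wit : ∀ n, ∃ x ∈ Sb, B.mulVec x - tn n • x ∈ K := fun n => (htnE n).2
    choose xn hxnSb hxnK using htn_wit
    -- subsequence of xn converging
    obtain ⟨x', hx'Sb, φ, hφmono, hφtend⟩ := hSbcomp.tendsto_subseq hxnSb
    have htn_le : ∀ n, tn n ≤ lam := fun n => le_csSup hbddAbove (htnE n)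
    have htn_tend : Filter.Tendsto tn Filter.atTop (nhds lam) := by
      have hlow : Filter.Tendsto (fun n : ℕ => lam - 1/(n+1)) Filter.atTop (nhds lam) := by
        have : Filter.Tendsto (fun n : ℕ => 1/((n:ℝ)+1)) Filter.atTop (nhds 0) :=
          tendsto_one_div_add_atTop_nhds_zero_nat
        have := Filter.Tendsto.const_sub lam this
        simpa using this
      exact tendsto_of_tendsto_of_tendsto_of_le_of_le hlow tendsto_const_nhds
        (fun n => le_of_lt (htngt n)) htn_le
    have htnφ : Filter.Tendsto (fun k => tn (φ k)) Filter.atTop (nhds lam) :=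
      htn_tend.comp hφmono.tendsto_atTop
    have hconv : Filter.Tendsto (fun k => B.mulVec (xn (φ k)) - tn (φ k) • xn (φ k))
        Filter.atTop (nhds (B.mulVec x' - lam • x')) := by
      apply Filter.Tendsto.sub
      · exact ((continuous_mulVec B).continuousAt).tendsto.comp hφtend
      · exact Filter.Tendsto.smul htnφ hφtend
    refine ⟨x', hx'Sb, ?_⟩
    exact hK.1.mem_of_tendsto hconv (Filter.Eventually.of_forall fun k => hxnK (φ k))
  -- lam > 0
  have hlampos : 0 < lam := by
    obtain ⟨x, hxSb⟩ := hSbne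
    have hint : B.mulVec x ∈ interior K := hBpos x hxSb.1 (hSb0 x hxSb)
    obtain ⟨ε, hε, hball⟩ := Metric.isOpen_iff.mp isOpen_interior _ hint
    have hmem : B.mulVec x - (ε/2) • x ∈ K := by
      apply interior_subset; apply hball
      rw [Metric.mem_ball, dist_eq_norm]
      have : B.mulVec x - (ε/2) • x - B.mulVec x = -((ε/2) • x) := by abel
      rw [this, norm_neg, norm_smul, Real.norm_eq_abs, abs_of_pos (by positivity)]
      have hx1 : ‖x‖ = 1 := by simpa using hxSb.2
      rw [hx1, mul_one]; linarith
    have : ε/2 ∈ E := ⟨by positivity, x, hxSb, hmem⟩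
    have := le_csSup hbddAbove this
    linarith
  -- the residual is zero
  set v := x' with hv
  have hvK : v ∈ K := hx'Sb.1
  have hv0 : v ≠ 0 := hSb0 _ hx'Sb
  have hres : B.mulVec v - lam • v = 0 := by
    by_contra hne
    set y := B.mulVec v with hy
    have hyint : y ∈ interior K := hBpos v hvK hv0
    have hy0 : y ≠ 0 := by
      intro hc
      exact (zero_not_mem_interior hK hvK hv0) (hc ▸ hyint)
    have hyK : y ∈ K := interior_subset hyint
    have hyn : 0 < ‖y‖ := norm_pos_iff.mpr hy0
    have hwint : B.mulVec (B.mulVec v - lam • v) ∈ interior K :=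
      hBpos _ hx'K hne
    have hBw : B.mulVec (B.mulVec v - lam • v) = B.mulVec y - lam • y := by
      rw [Matrix.mulVec_sub, Matrix.mulVec_smul]
    rw [hBw] at hwint
    obtain ⟨ε, hε, hball⟩ := Metric.isOpen_iff.mp isOpen_interior _ hwint
    have hmem : B.mulVec y - lam • y - (ε/(2*‖y‖)) • y ∈ K := by
      apply interior_subset; apply hball
      rw [Metric.mem_ball, dist_eq_norm]
      have : B.mulVec y - lam • y - (ε/(2*‖y‖)) • y - (B.mulVec y - lam • y)
          = -((ε/(2*‖y‖)) • y) := by abel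
      rw [this, norm_neg, norm_smul, Real.norm_eq_abs, abs_of_pos (by positivity)]
      have : ε/(2*‖y‖) * ‖y‖ = ε/2 := by field_simp
      rw [this]; linarith
    set t' := lam + ε/(2*‖y‖) with ht'
    have ht'E : t' ∈ E := by
      refine ⟨by positivity, ‖y‖⁻¹ • y, ?_, ?_⟩
      · constructor
        · exact hK.2.2.1 _ hyK _ (inv_nonneg.mpr (norm_nonneg _))
        · simp [norm_smul, abs_of_pos (inv_pos.mpr hyn), inv_mul_cancel₀ (ne_of_gt hyn)]
      · have heq : B.mulVec (‖y‖⁻¹ • y) - t' • (‖y‖⁻¹ • y)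
            = ‖y‖⁻¹ • (B.mulVec y - t' • y) := by
          rw [Matrix.mulVec_smul, smul_sub, smul_smul, smul_smul, mul_comm]
        rw [heq]
        apply hK.2.2.1 _ _ _ (inv_nonneg.mpr (norm_nonneg _))
        have : B.mulVec y - t' • y = B.mulVec y - lam • y - (ε/(2*‖y‖)) • y := by
          rw [ht', add_smul]; abel
        rw [this]; exact hmem
    have := le_csSup hbddAbove ht'E
    rw [ht'] at this
    have hpos : 0 < ε/(2*‖y‖) := by positivity
    linarith
  refine ⟨v, lam, ?_, hvK, hv0, hlampos, ?_⟩
  · have hBv : B.mulVec v = lam • v := by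
      have := sub_eq_zero.mp hres
      exact this
    have : v = lam⁻¹ • (B.mulVec v) := by
      rw [hBv, smul_smul, inv_mul_cancel₀ (ne_of_gt hlampos), one_smul]
    rw [this]
    have hint := hBpos v hvK hv0
    -- lam⁻¹ • interior point
    have hopen : IsOpen ((fun z : Fin d → ℝ => lam⁻¹ • z) '' interior K) :=
      (isOpenMap_smul₀ (inv_ne_zero (ne_of_gt hlampos))) _ isOpen_interior
    have hsub : ((fun z : Fin d → ℝ => lam⁻¹ • z) '' interior K) ⊆ K := by
      rintro _ ⟨z, hz, rfl⟩
      exact hK.2.2.1 _ (interior_subset hz) _ (inv_nonneg.mpr (le_of_lt hlampos))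
    exact mem_interior.mpr ⟨_, hsub, hopen, ⟨_, hint, rfl⟩⟩
  · exact sub_eq_zero.mp hres

theorem pc_exists_ne_zero (hd : 0 < d) {K : Set (Fin d → ℝ)} (h : IsProperCone K) :
    ∃ y ∈ K, y ≠ 0 := by
  obtain ⟨z, hz⟩ := h.2.2.2.2
  by_cases hz0 : z = 0
  · subst hz0
    obtain ⟨ε, hε, hball⟩ := Metric.isOpen_iff.mp isOpen_interior 0 hz
    set v : Fin d → ℝ := Pi.single ⟨0, hd⟩ 1 with hv
    have hv0 : v ≠ 0 := by
      intro hc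
      have := congrFun hc ⟨0, hd⟩
      simp [hv] at this
    have hvn : 0 < ‖v‖ := norm_pos_iff.mpr hv0
    refine ⟨(ε/(2*‖v‖)) • v, ?_, ?_⟩
    · apply interior_subset; apply hball
      rw [Metric.mem_ball, dist_eq_norm, sub_zero, norm_smul, Real.norm_eq_abs,
        abs_of_pos (by positivity)]
      have : ε/(2*‖v‖) * ‖v‖ = ε/2 := by field_simp
      rw [this]; linarith
    · intro hc
      rcases smul_eq_zero.mp hc with hc' | hc'
      · exact absurd hc' (by positivity)
      · exact hv0 hc'
  · exact ⟨z, interior_subset hz, hz0⟩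

theorem cross_contradiction {K : Set (Fin d → ℝ)} (hK : IsProperCone K)
    {B : Matrix (Fin d) (Fin d) ℝ}
    (hBpos : ∀ y ∈ K, y ≠ 0 → B.mulVec y ∈ interior K)
    {v u : Fin d → ℝ} {μ ν : ℝ}
    (hvint : v ∈ interior K) (hvK : v ∈ K) (hv0 : v ≠ 0) (hu0 : u ≠ 0)
    (huK : u ∉ K) (huK' : -u ∉ K)
    (hμ : 0 < μ) (hν : 0 < ν) (hμν : μ ≤ ν)
    (hBv : B.mulVec v = μ • v) (hBu : B.mulVec u = ν • u) : False := by
  classical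
  have hBK : ∀ y ∈ K, B.mulVec y ∈ K := by
    intro y hy
    by_cases hy0 : y = 0
    · rw [hy0, Matrix.mulVec_zero]; exact pc_zero hK
    · exact interior_subset (hBpos y hy hy0)
  have hun : 0 < ‖u‖ := norm_pos_iff.mpr hu0
  set S := {s : ℝ | 0 ≤ s ∧ v - s • u ∈ K} with hS
  have hS0 : (0:ℝ) ∈ S := ⟨le_refl 0, by rw [zero_smul, sub_zero]; exact hvK⟩
  have hSbdd : BddAbove S := by
    by_contra hnb
    rw [not_bddAbove_iff] at hnb
    have hseq : ∀ n : ℕ, ∃ s ∈ S, (n:ℝ) < s := fun n => hnb n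
    choose sn hsnS hsngt using hseq
    have hsn_tend : Filter.Tendsto sn Filter.atTop Filter.atTop :=
      Filter.tendsto_atTop_mono (fun n => le_of_lt (hsngt n)) tendsto_natCast_atTop_atTop
    have hsn_inv : Filter.Tendsto (fun n => (sn n)⁻¹) Filter.atTop (nhds 0) :=
      Filter.Tendsto.comp tendsto_inv_atTop_zero hsn_tend
    have hsn_pos : ∀ᶠ n in Filter.atTop, 0 < sn n := hsn_tend.eventually_gt_atTop 0
    have hmemn : ∀ᶠ n in Filter.atTop, (sn n)⁻¹ • v - u ∈ K := by
      filter_upwards [hsn_pos] with n hn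
      have h1 : (sn n)⁻¹ • (v - sn n • u) ∈ K :=
        hK.2.2.1 _ (hsnS n).2 _ (inv_nonneg.mpr (le_of_lt hn))
      have : (sn n)⁻¹ • (v - sn n • u) = (sn n)⁻¹ • v - u := by
        rw [smul_sub, smul_smul, inv_mul_cancel₀ (ne_of_gt hn), one_smul]
      rwa [this] at h1
    have hlim : Filter.Tendsto (fun n => (sn n)⁻¹ • v - u) Filter.atTop (nhds (-u)) := by
      have h1 : Filter.Tendsto (fun n => (sn n)⁻¹ • v) Filter.atTop (nhds 0) := by
        have := hsn_inv.smul (tendsto_const_nhds (x := v))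
        simpa using this
      have := h1.sub (tendsto_const_nhds (x := u))
      simpa using this
    exact huK' (hK.1.mem_of_tendsto hlim hmemn)
  have hSclosed : IsClosed S := by
    have h1 : IsClosed {s : ℝ | v - s • u ∈ K} :=
      IsClosed.preimage (by continuity) hK.1
    have : S = Set.Ici (0:ℝ) ∩ {s : ℝ | v - s • u ∈ K} := by
      ext s; simp [hS, Set.mem_Ici, and_comm]
    rw [this]
    exact isClosed_Ici.inter h1
  set s' := sSup S with hs'
  have hs'S : s' ∈ S := hSclosed.csSup_mem ⟨0, hS0⟩ hSbdd
  have hs'pos : 0 < s' := by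
    obtain ⟨ε, hε, hball⟩ := Metric.isOpen_iff.mp isOpen_interior _ hvint
    have hsmall : ε/(2*‖u‖) ∈ S := by
      refine ⟨by positivity, ?_⟩
      apply interior_subset; apply hball
      rw [Metric.mem_ball, dist_eq_norm]
      have : v - (ε/(2*‖u‖)) • u - v = -((ε/(2*‖u‖)) • u) := by abel
      rw [this, norm_neg, norm_smul, Real.norm_eq_abs, abs_of_pos (by positivity)]
      have : ε/(2*‖u‖) * ‖u‖ = ε/2 := by field_simp
      rw [this]; linarith
    have := le_csSup hSbdd hsmall
    have hp : 0 < ε/(2*‖u‖) := by positivity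
    linarith
  set w := v - s' • u with hw
  have hwK : w ∈ K := hs'S.2
  have hw0 : w ≠ 0 := by
    intro hc
    have : v = s' • u := by rwa [hw, sub_eq_zero] at hc
    have : u = s'⁻¹ • v := by
      rw [this, smul_smul, inv_mul_cancel₀ (ne_of_gt hs'pos), one_smul]
    rw [this] at huK
    exact huK (hK.2.2.1 _ hvK _ (inv_nonneg.mpr (le_of_lt hs'pos)))
  rcases lt_or_eq_of_le hμν with hlt | heq
  · -- μ < ν : iterate
    have hiter : ∀ n : ℕ, (μ^n) • v - (s' * ν^n) • u ∈ K := by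
      intro n
      induction n with
      | zero => simpa using hwK
      | succ n ih =>
          have := hBK _ ih
          have heq : B.mulVec ((μ^n) • v - (s' * ν^n) • u)
              = (μ^(n+1)) • v - (s' * ν^(n+1)) • u := by
            rw [Matrix.mulVec_sub, Matrix.mulVec_smul, Matrix.mulVec_smul, hBv, hBu]
            rw [smul_smul, smul_smul, pow_succ]
            ring_nf
          rwa [heq] at this
    have hscaled : ∀ n : ℕ, ((μ/ν)^n) • v - s' • u ∈ K := by
      intro n
      have h1 := hK.2.2.1 _ (hiter n) ((ν^n)⁻¹) (inv_nonneg.mpr (le_of_lt (pow_pos hν n)))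
      have heq : (ν^n)⁻¹ • ((μ^n) • v - (s' * ν^n) • u) = ((μ/ν)^n) • v - s' • u := by
        rw [smul_sub, smul_smul, smul_smul, div_pow]
        congr 2
        · rw [inv_mul_eq_div]
        · field_simp
      rwa [heq] at h1
    have hratio : Filter.Tendsto (fun n : ℕ => ((μ/ν)^n)) Filter.atTop (nhds 0) := by
      apply _root_.tendsto_pow_atTop_nhds_zero_of_lt_one
      · positivity
      · rw [div_lt_one hν]; exact hlt
    have hlim : Filter.Tendsto (fun n : ℕ => ((μ/ν)^n) • v - s' • u) Filter.atTop
        (nhds (-(s' • u))) := by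
      have h1 : Filter.Tendsto (fun n : ℕ => ((μ/ν)^n) • v) Filter.atTop (nhds 0) := by
        have := hratio.smul (tendsto_const_nhds (x := v))
        simpa using this
      have := h1.sub (tendsto_const_nhds (x := s' • u))
      simpa using this
    have hmem : -(s' • u) ∈ K :=
      hK.1.mem_of_tendsto hlim (Filter.Eventually.of_forall hscaled)
    have : -u ∈ K := by
      have h1 := hK.2.2.1 _ hmem (s'⁻¹) (inv_nonneg.mpr (le_of_lt hs'pos))
      have : s'⁻¹ • -(s' • u) = -u := by
        rw [smul_neg, smul_smul, inv_mul_cancel₀ (ne_of_gt hs'pos), one_smul]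
      rwa [this] at h1
    exact huK' this
  · -- μ = ν : w is an eigenvector in K, bump
    have hBw : B.mulVec w = μ • w := by
      rw [hw, Matrix.mulVec_sub, Matrix.mulVec_smul, hBv, hBu, ← heq, smul_smul, smul_sub,
        smul_smul]
      ring_nf
    have hwint : w ∈ interior K := by
      have h1 := hBpos w hwK hw0
      rw [hBw] at h1
      have := smul_interior_mem hK.2.2.1 h1 (inv_pos.mpr hμ)
      rwa [smul_smul, inv_mul_cancel₀ (ne_of_gt hμ), one_smul] at this
    obtain ⟨ε, hε, hball⟩ := Metric.isOpen_iff.mp isOpen_interior _ hwint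
    have hbump : s' + ε/(2*‖u‖) ∈ S := by
      refine ⟨by positivity, ?_⟩
      apply interior_subset; apply hball
      rw [Metric.mem_ball, dist_eq_norm]
      have h2 : v - (s' + ε/(2*‖u‖)) • u - w = -((ε/(2*‖u‖)) • u) := by
        rw [hw, add_smul]; abel
      rw [h2, norm_neg, norm_smul, Real.norm_eq_abs, abs_of_pos (by positivity)]
      have : ε/(2*‖u‖) * ‖u‖ = ε/2 := by field_simp
      rw [this]; linarith
    have := le_csSup hSbdd hbump
    have hp : 0 < ε/(2*‖u‖) := by positivity
    linarith

-- the pairwise intersection theorem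
theorem pairwise_intersect (hd : 0 < d) {𝒜 : Fin m → Matrix (Fin d) (Fin d) ℝ}
    (hirr : IsIrreducibleFamily 𝒜) {K1 K2 : Set (Fin d → ℝ)}
    (h1 : IsInvariantCone 𝒜 K1) (h2 : IsInvariantCone 𝒜 K2) :
    ∃ z : Fin d → ℝ, z ≠ 0 ∧ z ∈ K1 ∧ (z ∈ K2 ∨ z ∈ -K2) := by
  obtain ⟨B1, hB1pres, hB1pos⟩ := exists_strongpos hirr h1
  obtain ⟨B2, hB2pres, hB2pos⟩ := exists_strongpos hirr h2
  set B := B1 + B2 with hB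
  have hBadd : ∀ y, B.mulVec y = B1.mulVec y + B2.mulVec y := fun y => Matrix.add_mulVec _ _ _
  have hBpos1 : ∀ y ∈ K1, y ≠ 0 → B.mulVec y ∈ interior K1 := by
    intro y hy hy0
    rw [hBadd]
    exact int_add_mem (fun a ha b hb => pc_add h1.1 ha hb) (hB1pos y hy hy0)
      (hB2pres K1 h1 y hy)
  have hBpos2 : ∀ y ∈ K2, y ≠ 0 → B.mulVec y ∈ interior K2 := by
    intro y hy hy0
    rw [hBadd]
    have h1' : B1.mulVec y + B2.mulVec y = B2.mulVec y + B1.mulVec y := by ring_nf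
    rw [h1']
    exact int_add_mem (fun a ha b hb => pc_add h2.1 ha hb) (hB2pos y hy hy0)
      (hB1pres K2 h2 y hy)
  obtain ⟨y1, hy1K, hy10⟩ := pc_exists_ne_zero hd h1.1
  obtain ⟨y2, hy2K, hy20⟩ := pc_exists_ne_zero hd h2.1
  obtain ⟨v1, lam1, hv1int, hv1K, hv10, hlam1, hBv1⟩ := exists_eigenvector h1.1 hy1K hy10 hBpos1
  obtain ⟨v2, lam2, hv2int, hv2K, hv20, hlam2, hBv2⟩ := exists_eigenvector h2.1 hy2K hy20 hBpos2
  by_cases hc1 : v2 ∈ K1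
  · exact ⟨v2, hv20, hc1, Or.inl hv2K⟩
  by_cases hc2 : -v2 ∈ K1
  · refine ⟨-v2, by simpa using hv20, hc2, Or.inr ?_⟩
    rw [Set.mem_neg, neg_neg]; exact hv2K
  by_cases hc3 : v1 ∈ K2
  · exact ⟨v1, hv10, hv1K, Or.inl hc3⟩
  by_cases hc4 : -v1 ∈ K2
  · exact ⟨v1, hv10, hv1K, Or.inr (by rwa [Set.mem_neg])⟩
  exfalso
  rcases le_total lam1 lam2 with hle | hle
  · exact cross_contradiction h1.1 hBpos1 hv1int hv1K hv10 hv20 hc1 hc2 hlam1 hlam2 hle hBv1 hBv2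
  · exact cross_contradiction h2.1 hBpos2 hv2int hv2K hv20 hv10 hc3 hc4 hlam2 hlam1 hle hBv2 hBv1

theorem dot_shift (A : Matrix (Fin d) (Fin d) ℝ) (x v : Fin d → ℝ) :
    (A.mulVec x) ⬝ᵥ v = x ⬝ᵥ (Aᵀ.mulVec v) :=
  calc (A.mulVec x) ⬝ᵥ v = v ⬝ᵥ (A.mulVec x) := dotProduct_comm _ _
  _ = (Matrix.vecMul v A) ⬝ᵥ x := Matrix.dotProduct_mulVec v A x
  _ = x ⬝ᵥ (Matrix.vecMul v A) := dotProduct_comm _ _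
  _ = x ⬝ᵥ (Aᵀ.mulVec v) := by rw [Matrix.mulVec_transpose]

-- transpose family irreducible
theorem irr_transpose {𝒜 : Fin m → Matrix (Fin d) (Fin d) ℝ}
    (hirr : IsIrreducibleFamily 𝒜) : IsIrreducibleFamily (fun i => (𝒜 i)ᵀ) := by
  intro V hV
  classical
  set W : Submodule ℝ (Fin d → ℝ) :=
    { carrier := {x | ∀ v ∈ V, x ⬝ᵥ v = 0}
      add_mem' := by
        intro a b ha hb v hv
        rw [add_dotProduct, ha v hv, hb v hv, add_zero]
      zero_mem' := by
        intro v hv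
        rw [zero_dotProduct]
      smul_mem' := by
        intro c a ha v hv
        rw [smul_dotProduct, ha v hv, smul_zero] } with hW
  have hWinv : ∀ i, ∀ x ∈ W, (𝒜 i).mulVec x ∈ W := by
    intro i x hx v hv
    rw [dot_shift]
    exact hx _ (hV i v hv)
  rcases hirr W hWinv with hbot | htop
  · -- W = ⊥ : show V = ⊤
    right
    by_contra hVtop
    obtain ⟨x, hx⟩ : ∃ x : Fin d → ℝ, x ∉ V := by
      by_contra hc
      push_neg at hc
      exact hVtop (Submodule.eq_top_iff'.mpr hc)
    have hVclosed : IsClosed (V : Set (Fin d → ℝ)) := Submodule.closed_of_finiteDimensional V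
    have hVconvex : Convex ℝ (V : Set (Fin d → ℝ)) := by
      intro a ha b hb s t hs ht hst
      exact V.add_mem (V.smul_mem s ha) (V.smul_mem t hb)
    obtain ⟨f, u, hfx, hfV⟩ := geometric_hahn_banach_point_closed hVconvex hVclosed hx
    have hfzero : ∀ v ∈ V, f v = 0 := by
      intro v hv
      by_contra hne
      obtain ⟨t, ht⟩ : ∃ t : ℝ, t * f v < u := by
        rcases lt_or_gt_of_ne hne with hneg | hpos
        · exact ⟨(u-1)/f v, by
            rw [div_mul_eq_mul_div, mul_div_assoc, div_self (ne_of_lt hneg), mul_one]; linarith⟩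
        · exact ⟨(u-1)/f v, by
            rw [div_mul_eq_mul_div, mul_div_assoc, div_self (ne_of_gt hpos), mul_one]; linarith⟩
      have := hfV (t • v) (V.smul_mem t hv)
      rw [f.map_smul, smul_eq_mul] at this
      linarith
    obtain ⟨w, hw⟩ := clm_eq_dot f
    have hwW : w ∈ W := by
      intro v hv
      rw [← hw v]
      exact hfzero v hv
    rw [hbot] at hwW
    have hw0 : w = 0 := by simpa using hwW
    have hfall : ∀ y, f y = 0 := by
      intro y
      rw [hw y, hw0, zero_dotProduct]
    have h1 := hfV 0 V.zero_mem
    rw [hfall 0] at h1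
    rw [hfall x] at hfx
    linarith
  · -- W = ⊤ : V = ⊥
    left
    rw [Submodule.eq_bot_iff]
    intro v hv
    have : v ∈ W := htop ▸ Submodule.mem_top
    have hvv : v ⬝ᵥ v = 0 := this v hv
    have : ∀ i, v i = 0 := by
      intro i
      have hnn : ∀ j ∈ Finset.univ, (0:ℝ) ≤ v j * v j := fun j _ => mul_self_nonneg _
      have := (Finset.sum_eq_zero_iff_of_nonneg hnn).mp hvv i (Finset.mem_univ i)
      exact mul_self_eq_zero.mp this
    funext i
    exact this i

-- dual cone of an invariant cone is invariant for the transposed family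
theorem isInvariantCone_dual {𝒜 : Fin m → Matrix (Fin d) (Fin d) ℝ} {K : Set (Fin d → ℝ)}
    (hK : IsInvariantCone 𝒜 K) : IsInvariantCone (fun i => (𝒜 i)ᵀ) (dualConeSet K) := by
  constructor
  · refine ⟨dual_closed K, dual_convex K, fun x hx t ht => dual_mem_smul hx ht, ?_,
      dual_interior_nonempty hK.1⟩
    apply Set.Subset.antisymm
    · rintro x ⟨hx1, hx2⟩
      exact dual_pointed hK.1 hx1 (by rwa [Set.mem_neg] at hx2)
    · rintro x hx
      rw [Set.mem_singleton_iff] at hx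
      subst hx
      have h0 : (0 : Fin d → ℝ) ∈ dualConeSet K := fun y _ => by rw [zero_dotProduct]
      exact ⟨h0, by rw [Set.mem_neg, neg_zero]; exact h0⟩
  · intro i x hx y hy
    have h1 : ((𝒜 i)ᵀ.mulVec x) ⬝ᵥ y = x ⬝ᵥ (((𝒜 i)ᵀ)ᵀ.mulVec y) := dot_shift _ _ _
    rw [Matrix.transpose_transpose] at h1
    rw [h1]
    exact hx _ (hK.2 i y hy)

-- Zorn: minimal invariant cone
theorem exists_minimal_cone (hd : 0 < d) {𝒜 : Fin m → Matrix (Fin d) (Fin d) ℝ}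
    (hirr : IsIrreducibleFamily 𝒜) {L0 : Set (Fin d → ℝ)} (hL0 : IsInvariantCone 𝒜 L0) :
    ∃ Kmin : Set (Fin d → ℝ), IsInvariantCone 𝒜 Kmin ∧
      ∀ K' : Set (Fin d → ℝ), IsInvariantCone 𝒜 K' → Kmin ⊆ K' ∨ Kmin ⊆ -K' := by
  classical
  set S : Set (Set (Fin d → ℝ)) := {K | IsInvariantCone 𝒜 K} with hSdef
  have hzorn : ∀ c ⊆ S, IsChain (· ⊆ ·) c → c.Nonempty →
      ∃ lb ∈ S, ∀ s ∈ c, lb ⊆ s := by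
    intro c hcS hchain hcne
    obtain ⟨K0, hK0c⟩ := hcne
    have hK0 : IsInvariantCone 𝒜 K0 := hcS hK0c
    -- the intersection
    set lb := ⋂₀ c with hlb
    -- nonzero common element via compactness
    have hZ : ∃ z : Fin d → ℝ, z ∈ lb ∧ ‖z‖ = 1 := by
      haveI : Nonempty c := ⟨⟨K0, hK0c⟩⟩
      set Z : c → Set (Fin d → ℝ) := fun i => (i : Set (Fin d → ℝ)) ∩ Metric.sphere 0 1 with hZdef
      have hdir : Directed (· ⊇ ·) Z := by
        intro i j
        rcases eq_or_ne i j with rfl | hij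
        · exact ⟨i, Set.Subset.rfl, Set.Subset.rfl⟩
        · rcases hchain i.2 j.2 (fun h => hij (Subtype.ext h)) with h | h
          · exact ⟨i, Set.Subset.rfl, Set.inter_subset_inter_left _ h⟩
          · exact ⟨j, Set.inter_subset_inter_left _ h, Set.Subset.rfl⟩
      have hne : ∀ i : c, (Z i).Nonempty := by
        intro i
        obtain ⟨y, hyK, hy0⟩ := pc_exists_ne_zero hd (hcS i.2).1
        have hn : 0 < ‖y‖ := norm_pos_iff.mpr hy0
        refine ⟨‖y‖⁻¹ • y, (hcS i.2).1.2.2.1 y hyK _ (inv_nonneg.mpr (norm_nonneg _)), ?_⟩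
        simp [norm_smul, abs_of_pos (inv_pos.mpr hn), inv_mul_cancel₀ (ne_of_gt hn)]
      have hcomp : ∀ i : c, IsCompact (Z i) :=
        fun i => (isCompact_sphere 0 1).inter_left (hcS i.2).1.1
      have hcl : ∀ i : c, IsClosed (Z i) :=
        fun i => ((hcS i.2).1.1).inter Metric.isClosed_sphere
      obtain ⟨z, hz⟩ := IsCompact.nonempty_iInter_of_directed_nonempty_isCompact_isClosed
        Z hdir hne hcomp hcl
      rw [Set.mem_iInter] at hz
      refine ⟨z, ?_, by simpa using (hz ⟨K0, hK0c⟩).2⟩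
      rw [Set.mem_sInter]
      intro K hKc
      exact (hz ⟨K, hKc⟩).1
    obtain ⟨z, hzlb, hznorm⟩ := hZ
    have hz0 : z ≠ 0 := by
      intro hc; rw [hc] at hznorm; simp at hznorm
    have hCsub : Ccone 𝒜 z ⊆ lb := by
      intro x hx
      rw [Set.mem_sInter]
      intro K hKc
      exact Ccone_subset (hcS hKc) (Set.mem_sInter.mp hzlb K hKc) hx
    refine ⟨lb, ⟨⟨?_, ?_, ?_, ?_, ?_⟩, ?_⟩, fun s hs => Set.sInter_subset_of_mem hs⟩
    · exact isClosed_sInter (fun K hKc => (hcS hKc).1.1)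
    · exact convex_sInter (fun K hKc => (hcS hKc).1.2.1)
    · intro x hx t ht
      rw [Set.mem_sInter]
      intro K hKc
      exact (hcS hKc).1.2.2.1 x (Set.mem_sInter.mp hx K hKc) t ht
    · apply Set.Subset.antisymm
      · intro x hx
        obtain ⟨hx1, hx2⟩ := hx
        have h1 : x ∈ K0 := Set.mem_sInter.mp hx1 K0 hK0c
        have h2 : -x ∈ K0 := by
          rw [Set.mem_neg] at hx2
          exact Set.mem_sInter.mp hx2 K0 hK0c
        have : x ∈ K0 ∩ (-K0) := ⟨h1, by rwa [Set.mem_neg]⟩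
        rw [hK0.1.2.2.2.1] at this
        exact this
      · intro x hx
        rw [Set.mem_singleton_iff] at hx
        subst hx
        have h0 : (0:Fin d → ℝ) ∈ lb := by
          rw [Set.mem_sInter]
          exact fun K hKc => pc_zero (hcS hKc).1
        exact ⟨h0, by rw [Set.mem_neg, neg_zero]; exact h0⟩
    · obtain ⟨p, hp⟩ := Ccone_interior_nonempty hirr hz0
      exact ⟨p, interior_mono hCsub hp⟩
    · intro i x hx
      rw [Set.mem_sInter]
      intro K hKc
      exact (hcS hKc).2 i x (Set.mem_sInter.mp hx K hKc)
  obtain ⟨Kmin, hKminsub, hKminmin⟩ := zorn_superset_nonempty S hzorn L0 hL0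
  have hKmininv : IsInvariantCone 𝒜 Kmin := hKminmin.1
  refine ⟨Kmin, hKmininv, ?_⟩
  intro K' hK'
  obtain ⟨z, hz0, hzmin, hzK'⟩ := pairwise_intersect hd hirr hKmininv hK'
  have hCeq : Ccone 𝒜 z = Kmin := by
    have hsub : Ccone 𝒜 z ⊆ Kmin := Ccone_subset hKmininv hzmin
    have hCinv : IsInvariantCone 𝒜 (Ccone 𝒜 z) := isInvariantCone_Ccone hirr hKmininv hzmin hz0
    have := hKminmin.2 (y := Ccone 𝒜 z) hCinv hsub
    exact Set.Subset.antisymm hsub this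
  rcases hzK' with hzK | hzK
  · left
    rw [← hCeq]
    exact Ccone_subset hK' hzK
  · right
    rw [← hCeq]
    exact Ccone_subset (isInvariantCone_neg hK') hzK

end AuxInvCone

open AuxInvCone in

theorem max_cone_dual_of_min_cone_transpose {d m : ℕ} (hm : 0 < m)
    (𝒜 : Fin m → Matrix (Fin d) (Fin d) ℝ)
    (hirr : IsIrreducibleFamily 𝒜)
    (hex : ∃ K : Set (Fin d → ℝ), IsInvariantCone 𝒜 K) :
    ∃ Kmin Kmax : Set (Fin d → ℝ),
      IsMinimalInvariantCone (fun i => (𝒜 i)ᵀ) Kmin ∧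
      IsMaximalInvariantCone 𝒜 Kmax ∧
      Kmax = dualConeSet Kmin := by
  rcases Nat.eq_zero_or_pos d with hd0 | hd
  · -- degenerate case d = 0
    subst hd0
    haveI : Subsingleton (Fin 0 → ℝ) := by
      constructor
      intro a b
      funext i
      exact absurd i.2 (Nat.not_lt_zero _)
    have huniv : ∀ (s : Set (Fin 0 → ℝ)), (0:Fin 0 → ℝ) ∈ s → s = Set.univ := by
      intro s h0
      apply Set.eq_univ_of_forall
      intro x
      rwa [Subsingleton.elim x 0]
    have hdot : ∀ x y : Fin 0 → ℝ, x ⬝ᵥ y = 0 := by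
      intro x y
      simp [dotProduct]
    have hproper : IsProperCone (Set.univ : Set (Fin 0 → ℝ)) := by
      refine ⟨isClosed_univ, convex_univ, fun x _ t _ => trivial, ?_, ⟨0, by simp⟩⟩
      apply Set.Subset.antisymm
      · intro x _
        rw [Set.mem_singleton_iff]
        exact Subsingleton.elim x 0
      · intro x _
        exact ⟨trivial, trivial⟩
    have hinv : IsInvariantCone (fun i => (𝒜 i)ᵀ) (Set.univ : Set (Fin 0 → ℝ)) :=
      ⟨hproper, fun _ _ _ => trivial⟩
    have hinv2 : IsInvariantCone 𝒜 (Set.univ : Set (Fin 0 → ℝ)) :=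
      ⟨hproper, fun _ _ _ => trivial⟩
    refine ⟨Set.univ, Set.univ, ⟨hinv, ?_⟩, ⟨hinv2, ?_⟩, ?_⟩
    · intro K' hK'
      left
      intro x _
      rw [Subsingleton.elim x 0]
      exact pc_zero hK'.1
    · intro K' _
      left
      exact Set.subset_univ _
    · symm
      apply huniv
      intro y _
      rw [hdot]
  · obtain ⟨K, hK⟩ := hex
    have hirrB : IsIrreducibleFamily (fun i => (𝒜 i)ᵀ) := irr_transpose hirr
    have hL0 : IsInvariantCone (fun i => (𝒜 i)ᵀ) (dualConeSet K) := isInvariantCone_dual hK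
    obtain ⟨Kmin, hKmininv, hmin⟩ := exists_minimal_cone hd hirrB hL0
    set Kmax := dualConeSet Kmin with hKmax
    have hKmaxinv : IsInvariantCone 𝒜 Kmax := by
      have h1 := isInvariantCone_dual (𝒜 := fun i => (𝒜 i)ᵀ) hKmininv
      have h2 : (fun i => ((fun j => (𝒜 j)ᵀ) i)ᵀ) = 𝒜 := by
        funext i
        exact Matrix.transpose_transpose _
      rwa [h2] at h1
    refine ⟨Kmin, Kmax, ⟨hKmininv, hmin⟩, ⟨hKmaxinv, ?_⟩, rfl⟩
    intro K' hK'
    have hD' : IsInvariantCone (fun i => (𝒜 i)ᵀ) (dualConeSet K') := isInvariantCone_dual hK'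
    rcases hmin _ hD' with hsub | hsub
    · left
      intro a ha y hy
      have : y ∈ dualConeSet K' := hsub hy
      have := this a ha
      rwa [dotProduct_comm] at this
    · right
      intro a ha y hy
      rw [Set.mem_neg] at ha
      have h1 : -y ∈ dualConeSet K' := hsub hy
      have h2 := h1 (-a) ha
      rw [neg_dotProduct, dotProduct_neg, neg_neg] at h2
      rwa [dotProduct_comm] at h2
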